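/- Let X = {a,b}, and let h : X* → X* be the morphism with h(a) = a^s and h(b) = a^{γ_1} b a^{α_1} b ⋯ b a^{α_{p-1}} b a^{γ_2}, where s ≥ 1, p ≥ 2 and all exponents are nonnegative. Let w = ω(h). If m ≥ 1, k ≥ 0, d_m,…,d_{m+k} ∈ {0,1,…,p-1} and d_m ≠ 0, then A_w(d_m p^m + d_{m+1} p^{m+1} + ⋯ + d_{m+k} p^{m+k}) = α_{d_m} s^m + (γ_1+γ_2)(1 + s + ⋯ + s^{m-1}). -/

import Mathlib

/-- Words over the binary alphabet: `false` is the letter `a`, `true` is the letter `b`. -/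
abbrev Word := List Bool

/-- The morphism of the free monoid determined by the images `g` of the letters. -/
def applyG (g : Bool → Word) (w : Word) : Word := w.flatMap g

/-- `a^n`. -/
def rep (n : ℕ) : Word := List.replicate n false

/-- `b a^{α 1} b a^{α 2} ⋯ b a^{α (p-1)} b`, a word with `p` occurrences of `b`. -/
def blockWord (p : ℕ) (α : ℕ → ℕ) : Word :=
  ((List.range (p - 1)).flatMap fun i => true :: rep (α (i + 1))) ++ [true]

/-- `w^k`. -/
def wordPow (w : Word) (k : ℕ) : Word := (List.replicate k w).flatten

/-- `u` and `v` are `a`-conjugates. -/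
def AConj (u v : Word) : Prop :=
  ∃ p q r s : ℕ, ∃ w : Word,
    u = rep p ++ w ++ rep q ∧ v = rep r ++ w ++ rep s ∧ p + q = r + s

/-- `w` is the infinite word `ω(g)`: for every `n`, the word obtained from `g^n(b)` by deleting
all occurrences of `a` preceding the first occurrence of `b` is a prefix of `w`. -/
def IsOmega (g : Bool → Word) (w : ℕ → Bool) : Prop :=
  ∀ n k : ℕ, ∀ hk : k < (((applyG g)^[n] [true]).dropWhile (fun x => !x)).length,
    (((applyG g)^[n] [true]).dropWhile (fun x => !x)).get ⟨k, hk⟩ = w k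

/-- `Aw w i` (for `i ≥ 1`): the number of occurrences of `a` in `w` strictly between the
`i`-th and `(i+1)`-th occurrences of `b` in `w`. -/
noncomputable def Aw (w : ℕ → Bool) (i : ℕ) : ℕ :=
  Nat.nth (fun n => w n = true) i - Nat.nth (fun n => w n = true) (i - 1) - 1

namespace St8
variable (s p γ₁ γ₂ : ℕ) (α : ℕ → ℕ)

def A (n : ℕ) : ℕ :=
  if h : 2 ≤ p ∧ n ≠ 0 ∧ n % p = 0 then γ₁ + γ₂ + s * A (n / p) else α (n % p)
termination_by n
decreasing_by exact Nat.div_lt_self (Nat.pos_of_ne_zero h.2.1) (by omega)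

theorem A_of_mod {n : ℕ} (hn : n % p ≠ 0) : A s p γ₁ γ₂ α n = α (n % p) := by
  rw [A]; simp [hn]

theorem A_mul (hp : 2 ≤ p) {n : ℕ} (hn : n ≠ 0) :
    A s p γ₁ γ₂ α (p * n) = γ₁ + γ₂ + s * A s p γ₁ γ₂ α n := by
  rw [A]
  have h1 : p * n ≠ 0 := by positivity
  have : p * n % p = 0 := Nat.mul_mod_right p n
  simp [hp, h1, this, Nat.mul_div_cancel_left n (by omega : 0 < p)]

theorem A_pow_mul (hp : 2 ≤ p) (m : ℕ) {t : ℕ} (ht : t % p ≠ 0) :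
    A s p γ₁ γ₂ α (p ^ m * t) =
      α (t % p) * s ^ m + (γ₁ + γ₂) * ∑ j ∈ Finset.range m, s ^ j := by
  induction m with
  | zero => simp [A_of_mod s p γ₁ γ₂ α ht]
  | succ m ih =>
      have ht0 : t ≠ 0 := by rintro rfl; simp at ht
      have : p ^ (m + 1) * t = p * (p ^ m * t) := by ring
      rw [this, A_mul s p γ₁ γ₂ α hp (by positivity), ih]
      have : ∑ j ∈ Finset.range (m + 1), s ^ j
          = 1 + s * ∑ j ∈ Finset.range m, s ^ j := by
        rw [Finset.sum_range_succ', Finset.mul_sum]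
        simp [pow_succ, mul_comm, add_comm]
      rw [this]; ring


def B : ℕ → ℕ
  | 0 => 0
  | i + 1 => B i + A s p γ₁ γ₂ α (i + 1) + 1

theorem B_strictMono : StrictMono (B s p γ₁ γ₂ α) :=
  strictMono_nat_of_lt_succ fun i => by simp [B]

theorem B_le_self (i : ℕ) : i ≤ B s p γ₁ γ₂ α i := by
  induction i with
  | zero => simp [B]
  | succ i ih => simp [B]; omega

def V : ℕ → Word
  | 0 => [true]
  | i + 1 => V i ++ rep (A s p γ₁ γ₂ α (i + 1)) ++ [true]

theorem length_V (i : ℕ) : (V s p γ₁ γ₂ α i).length = B s p γ₁ γ₂ α i + 1 := by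
  induction i with
  | zero => simp [V, B]
  | succ i ih => simp [V, B, ih, rep]; omega

theorem V_prefix {i j : ℕ} (hij : i ≤ j) : V s p γ₁ γ₂ α i <+: V s p γ₁ γ₂ α j := by
  induction j with
  | zero => simp_all
  | succ j ih =>
      rcases Nat.lt_or_ge i (j+1) with hlt | hge
      · exact (ih (by omega)).trans ⟨rep (A s p γ₁ γ₂ α (j + 1)) ++ [true], by simp [V]⟩
      · have : i = j + 1 := by omega
        subst this; exact List.prefix_rfl

theorem V_add (i t : ℕ) :
    V s p γ₁ γ₂ α (i + t) = V s p γ₁ γ₂ α i ++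
      (List.range t).flatMap (fun j => rep (A s p γ₁ γ₂ α (i + 1 + j)) ++ [true]) := by
  induction t with
  | zero => simp
  | succ t ih =>
      rw [List.range_succ, List.flatMap_append, ← List.append_assoc, ← ih]
      show V s p γ₁ γ₂ α (i + t + 1) = _
      have e : i + 1 + t = i + t + 1 := by omega
      simp only [V, List.flatMap_cons, List.flatMap_nil, List.append_nil,
        List.append_assoc, e]


theorem flatMap_congr {l : List ℕ} {f g : ℕ → Word} (h : ∀ a ∈ l, f a = g a) :
    l.flatMap f = l.flatMap g := by
  induction l with
  | nil => simp
  | cons a l ih =>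
      simp only [List.flatMap_cons]
      rw [h a (by simp), ih fun b hb => h b (by simp [hb])]

theorem shift_lemma (n : ℕ) (f : ℕ → Word) :
    (List.range n).flatMap (fun i => true :: f i) ++ [true]
      = true :: (List.range n).flatMap (fun i => f i ++ [true]) := by
  induction n with
  | zero => simp
  | succ n ih =>
      rw [List.range_succ]
      simp only [List.flatMap_append, List.flatMap_cons, List.flatMap_nil, List.append_nil]
      have e : (true :: f n) ++ [true] = [true] ++ (f n ++ [true]) := by simp
      rw [List.append_assoc, e, ← List.append_assoc, ih]
      simp

theorem rep_rep' (a b : ℕ) : rep a ++ rep b = rep (a + b) := by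
  show List.replicate a false ++ List.replicate b false = List.replicate (a + b) false
  rw [List.replicate_add]

theorem rep_rep (a b : ℕ) (l : Word) : rep a ++ (rep b ++ l) = rep (a + b) ++ l := by
  show List.replicate a false ++ (List.replicate b false ++ l)
      = List.replicate (a + b) false ++ l
  rw [List.replicate_add, List.append_assoc]

theorem blockWord_eq :
    blockWord p α = true :: (List.range (p - 1)).flatMap (fun j => rep (α (j + 1)) ++ [true]) := by
  rw [blockWord, shift_lemma]

theorem V_block (hp : 2 ≤ p) : V s p γ₁ γ₂ α (p - 1) = blockWord p α := by
  have := V_add s p γ₁ γ₂ α 0 (p - 1)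
  rw [Nat.zero_add] at this
  rw [this, blockWord_eq]
  have : ∀ j ∈ List.range (p - 1),
      rep (A s p γ₁ γ₂ α (0 + 1 + j)) ++ [true] = rep (α (j + 1)) ++ [true] := by
    intro j hj
    rw [List.mem_range] at hj
    rw [show 0 + 1 + j = j + 1 by omega,
      A_of_mod s p γ₁ γ₂ α (by rw [Nat.mod_eq_of_lt (by omega)]; omega),
      Nat.mod_eq_of_lt (show j + 1 < p by omega)]
  rw [flatMap_congr this]
  simp [V]

variable (h : Bool → Word)

theorem applyG_append (x y : Word) : applyG h (x ++ y) = applyG h x ++ applyG h y := by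
  simp [applyG]

theorem applyG_rep (ha : h false = rep s) (c : ℕ) : applyG h (rep c) = rep (s * c) := by
  induction c with
  | zero => simp [applyG, rep]
  | succ c ih =>
      rw [show rep (c+1) = [false] ++ rep c by simp [rep, List.replicate_succ],
        applyG_append, ih]
      simp only [applyG, List.flatMap_cons, List.flatMap_nil, List.append_nil, ha]
      rw [show s * (c + 1) = s + s * c by ring]
      show List.replicate s false ++ List.replicate (s * c) false
          = List.replicate (s + s * c) false
      rw [List.replicate_add]

theorem applyG_V (hp : 2 ≤ p) (ha : h false = rep s)
    (hb : h true = rep γ₁ ++ blockWord p α ++ rep γ₂) (i : ℕ) :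
    applyG h (V s p γ₁ γ₂ α i)
      = rep γ₁ ++ V s p γ₁ γ₂ α (p * (i + 1) - 1) ++ rep γ₂ := by
  induction i with
  | zero =>
      show applyG h [true] = _
      simp only [applyG, List.flatMap_cons, List.flatMap_nil, List.append_nil, hb]
      rw [show p * (0 + 1) - 1 = p - 1 by norm_num, V_block s p γ₁ γ₂ α hp]
  | succ i ih =>
      show applyG h (V s p γ₁ γ₂ α i ++ rep (A s p γ₁ γ₂ α (i + 1)) ++ [true]) = _
      rw [applyG_append, applyG_append, ih, applyG_rep s h ha]
      have hVs : applyG h [true] = rep γ₁ ++ blockWord p α ++ rep γ₂ := by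
        simp [applyG, hb]
      rw [hVs]
      -- expand RHS V
      have hple : 1 ≤ p * (i + 1) := Nat.one_le_iff_ne_zero.2 (by positivity)
      have e1 : p * (i + 1 + 1) - 1 = (p * (i + 1) - 1) + p := by
        have h1 : p * (i + 1 + 1) = p * (i + 1) + p := by ring
        omega
      rw [e1, V_add]
      have e2 : ∀ j, p * (i + 1) - 1 + 1 + j = p * (i + 1) + j := by omega
      have e3 : (List.range p).flatMap
            (fun j => rep (A s p γ₁ γ₂ α (p * (i + 1) - 1 + 1 + j)) ++ [true])
          = (rep (γ₁ + γ₂ + s * A s p γ₁ γ₂ α (i + 1)) ++ [true]) ++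
            (List.range (p - 1)).flatMap (fun j => rep (α (j + 1)) ++ [true]) := by
        rw [show p = (p - 1) + 1 by omega, List.range_succ_eq_map, List.flatMap_cons,
          List.flatMap_map]
        rw [show (p-1)+1 = p by omega]
        congr 1
        · rw [e2, Nat.add_zero, A_mul s p γ₁ γ₂ α hp (by omega)]
        · apply flatMap_congr
          intro j hj
          rw [List.mem_range] at hj
          have hmod : (p * (i + 1) + (j + 1)) % p = j + 1 := by
            rw [Nat.mul_add_mod, Nat.mod_eq_of_lt (by omega)]
          rw [e2, A_of_mod s p γ₁ γ₂ α (by rw [hmod]; omega), hmod]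
      rw [e3, blockWord_eq]
      simp only [List.append_assoc, List.cons_append, List.nil_append, rep_rep]
      rw [show γ₂ + (s * A s p γ₁ γ₂ α (i + 1) + γ₁)
          = γ₁ + γ₂ + s * A s p γ₁ γ₂ α (i + 1) by ring]

theorem V_cons (i : ℕ) : ∃ l, V s p γ₁ γ₂ α i = true :: l := by
  induction i with
  | zero => exact ⟨[], rfl⟩
  | succ i ih =>
      obtain ⟨l, hl⟩ := ih
      exact ⟨l ++ rep (A s p γ₁ γ₂ α (i + 1)) ++ [true], by simp [V, hl]⟩

theorem dropWhile_rep_V (c i : ℕ) (x : Word) :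
    (rep c ++ (V s p γ₁ γ₂ α i ++ x)).dropWhile (fun y => !y) = V s p γ₁ γ₂ α i ++ x := by
  obtain ⟨l, hl⟩ := V_cons s p γ₁ γ₂ α i
  induction c with
  | zero => simp [rep, hl]
  | succ c ih =>
      rw [show rep (c + 1) = false :: rep c by simp [rep, List.replicate_succ]]
      simpa using ih

theorem iterate_eq (hp : 2 ≤ p) (ha : h false = rep s)
    (hb : h true = rep γ₁ ++ blockWord p α ++ rep γ₂) (n : ℕ) :
    ∃ c, (applyG h)^[n] [true] = rep c ++
      (V s p γ₁ γ₂ α (p ^ n - 1) ++ rep (γ₂ * ∑ j ∈ Finset.range n, s ^ j)) := by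
  induction n with
  | zero => exact ⟨0, by simp [rep, V]⟩
  | succ n ih =>
      obtain ⟨c, hc⟩ := ih
      rw [Function.iterate_succ_apply', hc, applyG_append, applyG_append,
        applyG_rep s h ha, applyG_rep s h ha,
        applyG_V s p γ₁ γ₂ α h hp ha hb]
      have hpn : 1 ≤ p ^ n := Nat.one_le_pow _ _ (by omega)
      have e1 : p * (p ^ n - 1 + 1) - 1 = p ^ (n + 1) - 1 := by
        rw [Nat.sub_add_cancel hpn]; ring_nf
      refine ⟨s * c + γ₁, ?_⟩
      rw [e1]
      have e2 : γ₂ + s * (γ₂ * ∑ j ∈ Finset.range n, s ^ j)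
          = γ₂ * ∑ j ∈ Finset.range (n + 1), s ^ j := by
        rw [Finset.sum_range_succ', pow_zero, Nat.mul_add, Nat.mul_one,
          add_comm (γ₂ * _) γ₂]
        congr 1
        simp only [Finset.mul_sum]
        apply Finset.sum_congr rfl
        intro x _
        rw [pow_succ]
        ring
      simp only [List.append_assoc, rep_rep, rep_rep']
      rw [e2]

theorem u_eq (hp : 2 ≤ p) (ha : h false = rep s)
    (hb : h true = rep γ₁ ++ blockWord p α ++ rep γ₂) (n : ℕ) :
    ((applyG h)^[n] [true]).dropWhile (fun y => !y)
      = V s p γ₁ γ₂ α (p ^ n - 1) ++ rep (γ₂ * ∑ j ∈ Finset.range n, s ^ j) := by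
  obtain ⟨c, hc⟩ := iterate_eq s p γ₁ γ₂ α h hp ha hb n
  rw [hc, dropWhile_rep_V]

def Wd (n : ℕ) : Bool := (V s p γ₁ γ₂ α n).getD n false

theorem lt_length_V_self (n : ℕ) : n < (V s p γ₁ γ₂ α n).length := by
  rw [length_V]
  have := B_le_self s p γ₁ γ₂ α n
  omega

theorem getV (j n : ℕ) (hn : n < (V s p γ₁ γ₂ α j).length) :
    (V s p γ₁ γ₂ α j).get ⟨n, hn⟩ = Wd s p γ₁ γ₂ α n := by
  have hnn := lt_length_V_self s p γ₁ γ₂ α n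
  rw [Wd, List.getD_eq_getElem _ _ hnn]
  rcases le_total j n with hj | hj
  · have hpre := V_prefix s p γ₁ γ₂ α hj
    simp only [List.get_eq_getElem]
    exact hpre.getElem hn
  · have hpre := V_prefix s p γ₁ γ₂ α hj
    simp only [List.get_eq_getElem]
    exact (hpre.getElem hnn).symm

theorem V_get_true (j : ℕ) : ∀ (n : ℕ) (hn : n < (V s p γ₁ γ₂ α j).length),
    ((V s p γ₁ γ₂ α j).get ⟨n, hn⟩ = true ↔ ∃ i, i ≤ j ∧ B s p γ₁ γ₂ α i = n) := by
  induction j with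
  | zero =>
      intro n hn
      have : n = 0 := by simpa [V] using hn
      subst this
      exact ⟨fun _ => ⟨0, le_refl 0, rfl⟩, fun _ => rfl⟩
  | succ j ih =>
      intro n hn
      have hmono := B_strictMono s p γ₁ γ₂ α
      have hlen : (V s p γ₁ γ₂ α j).length = B s p γ₁ γ₂ α j + 1 := length_V _ _ _ _ _ _
      have hBsucc : B s p γ₁ γ₂ α (j + 1)
          = B s p γ₁ γ₂ α j + A s p γ₁ γ₂ α (j + 1) + 1 := rfl
      have hVs : V s p γ₁ γ₂ α (j + 1)
          = (V s p γ₁ γ₂ α j ++ rep (A s p γ₁ γ₂ α (j + 1))) ++ [true] := by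
        simp [V]
      have hn' : n < B s p γ₁ γ₂ α j + 1 + A s p γ₁ γ₂ α (j + 1) + 1 := by
        have := hn
        rw [length_V] at this
        omega
      simp only [List.get_eq_getElem]
      by_cases h1 : n < B s p γ₁ γ₂ α j + 1
      · have hlt : n < (V s p γ₁ γ₂ α j).length := by omega
        have : (V s p γ₁ γ₂ α (j + 1))[n]'hn = (V s p γ₁ γ₂ α j)[n]'hlt := by
          simp only [hVs]
          rw [List.getElem_append_left (show n < (V s p γ₁ γ₂ α j
              ++ rep (A s p γ₁ γ₂ α (j + 1))).length by
            simp only [List.length_append, hlen]; omega),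
            List.getElem_append_left hlt]
        rw [this]
        have := ih n hlt
        simp only [List.get_eq_getElem] at this
        rw [this]
        constructor
        · rintro ⟨i, hi, rfl⟩
          exact ⟨i, by omega, rfl⟩
        · rintro ⟨i, hi, rfl⟩
          refine ⟨i, ?_, rfl⟩
          by_contra hcon
          have : j + 1 ≤ i := by omega
          have := hmono.monotone this
          omega
      · by_cases h2 : n < B s p γ₁ γ₂ α j + 1 + A s p γ₁ γ₂ α (j + 1)
        · have hfalse : (V s p γ₁ γ₂ α (j + 1))[n]'hn = false := by
            simp only [hVs]
            rw [List.getElem_append_left (show n < (V s p γ₁ γ₂ α j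
                ++ rep (A s p γ₁ γ₂ α (j + 1))).length by
              simp only [List.length_append, hlen, rep, List.length_replicate]; omega),
              List.getElem_append_right (by omega)]
            simp [rep]
          rw [hfalse]
          simp only [Bool.false_eq_true, false_iff]
          rintro ⟨i, hi, hB⟩
          rcases Nat.lt_or_ge i (j + 1) with hij | hij
          · have : B s p γ₁ γ₂ α i ≤ B s p γ₁ γ₂ α j := hmono.monotone (by omega)
            omega
          · have : B s p γ₁ γ₂ α (j + 1) ≤ B s p γ₁ γ₂ α i := hmono.monotone hij
            omega
        · have hne : n = B s p γ₁ γ₂ α j + 1 + A s p γ₁ γ₂ α (j + 1) := by omega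
          have htrue : (V s p γ₁ γ₂ α (j + 1))[n]'hn = true := by
            simp only [hVs]
            rw [List.getElem_append_right (show (V s p γ₁ γ₂ α j
                ++ rep (A s p γ₁ γ₂ α (j + 1))).length ≤ n by
              simp only [List.length_append, hlen, rep, List.length_replicate]; omega)]
            simp
          rw [htrue]
          simp only [true_iff]
          exact ⟨j + 1, le_refl _, by omega⟩

theorem Wd_true_iff (n : ℕ) :
    Wd s p γ₁ γ₂ α n = true ↔ ∃ i, B s p γ₁ γ₂ α i = n := by
  have hlt := lt_length_V_self s p γ₁ γ₂ α n
  rw [Wd, List.getD_eq_getElem _ _ hlt]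
  have := V_get_true s p γ₁ γ₂ α n n hlt
  simp only [List.get_eq_getElem] at this
  rw [this]
  constructor
  · rintro ⟨i, _, hB⟩; exact ⟨i, hB⟩
  · rintro ⟨i, hB⟩
    refine ⟨i, ?_, hB⟩
    have := B_le_self s p γ₁ γ₂ α i
    omega

theorem nth_B (i : ℕ) :
    Nat.nth (fun n => Wd s p γ₁ γ₂ α n = true) i = B s p γ₁ γ₂ α i := by
  have hmono := B_strictMono s p γ₁ γ₂ α
  have hq : Wd s p γ₁ γ₂ α (B s p γ₁ γ₂ α i) = true :=
    (Wd_true_iff s p γ₁ γ₂ α _).2 ⟨i, rfl⟩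
  have hc : Nat.count (fun n => Wd s p γ₁ γ₂ α n = true) (B s p γ₁ γ₂ α i) = i := by
    rw [Nat.count_eq_card_filter_range]
    have hset : {x ∈ Finset.range (B s p γ₁ γ₂ α i) | Wd s p γ₁ γ₂ α x = true}
        = (Finset.range i).image (B s p γ₁ γ₂ α) := by
      ext x
      simp only [Finset.mem_filter, Finset.mem_range, Finset.mem_image, Wd_true_iff]
      constructor
      · rintro ⟨hx, t, rfl⟩
        exact ⟨t, hmono.lt_iff_lt.1 hx, rfl⟩
      · rintro ⟨t, ht, rfl⟩
        exact ⟨hmono ht, t, rfl⟩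
    rw [hset, Finset.card_image_of_injective _ hmono.injective, Finset.card_range]
  have := Nat.nth_count (p := fun n => Wd s p γ₁ γ₂ α n = true) hq
  rw [hc] at this
  exact this

theorem w_eq_Wd (hp : 2 ≤ p) (ha : h false = rep s)
    (hb : h true = rep γ₁ ++ blockWord p α ++ rep γ₂)
    (w : ℕ → Bool) (hw : IsOmega h w) : w = Wd s p γ₁ γ₂ α := by
  funext k
  have hE : 1 % p = 1 := Nat.mod_eq_of_lt (by omega)
  have hpow : k < p ^ (k + 1) - 1 + 1 := by
    have h2 : k < 2 ^ (k + 1) := (Nat.lt_two_pow_self (n := k)).trans_le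
      (Nat.pow_le_pow_right (by omega) (by omega))
    have h3 : 2 ^ (k + 1) ≤ p ^ (k + 1) := Nat.pow_le_pow_left (by omega) _
    have h4 : 1 ≤ p ^ (k + 1) := Nat.one_le_pow _ _ (by omega)
    omega
  have hu := u_eq s p γ₁ γ₂ α h hp ha hb (k + 1)
  have hk : k < (((applyG h)^[k + 1] [true]).dropWhile (fun y => !y)).length := by
    rw [hu, List.length_append, length_V]
    have := B_le_self s p γ₁ γ₂ α (p ^ (k + 1) - 1)
    omega
  have hwk := hw (k + 1) k hk
  rw [← hwk]
  -- the dropWhile word is a prefix of V (p^(k+1))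
  have hA : γ₂ * ∑ j ∈ Finset.range (k + 1), s ^ j ≤ A s p γ₁ γ₂ α (p ^ (k + 1)) := by
    have := A_pow_mul s p γ₁ γ₂ α hp (k + 1) (t := 1) (by rw [hE]; omega)
    rw [Nat.mul_one, hE] at this
    rw [this]
    have : γ₂ * ∑ j ∈ Finset.range (k + 1), s ^ j
        ≤ (γ₁ + γ₂) * ∑ j ∈ Finset.range (k + 1), s ^ j :=
      Nat.mul_le_mul_right _ (by omega)
    omega
  have hVeq : V s p γ₁ γ₂ α (p ^ (k + 1))
      = (V s p γ₁ γ₂ α (p ^ (k + 1) - 1) ++ rep (γ₂ * ∑ j ∈ Finset.range (k + 1), s ^ j))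
        ++ (rep (A s p γ₁ γ₂ α (p ^ (k + 1)) - γ₂ * ∑ j ∈ Finset.range (k + 1), s ^ j)
            ++ [true]) := by
    have h4 : 1 ≤ p ^ (k + 1) := Nat.one_le_pow _ _ (by omega)
    conv_lhs => rw [show p ^ (k + 1) = (p ^ (k + 1) - 1) + 1 by omega]
    show V s p γ₁ γ₂ α (p ^ (k + 1) - 1) ++ rep (A s p γ₁ γ₂ α (p ^ (k + 1) - 1 + 1)) ++ [true] = _
    rw [show p ^ (k + 1) - 1 + 1 = p ^ (k + 1) by omega]
    rw [show A s p γ₁ γ₂ α (p ^ (k + 1))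
        = γ₂ * ∑ j ∈ Finset.range (k + 1), s ^ j
          + (A s p γ₁ γ₂ α (p ^ (k + 1)) - γ₂ * ∑ j ∈ Finset.range (k + 1), s ^ j) by omega,
      ← rep_rep']
    simp [List.append_assoc]
  have hpre : ((applyG h)^[k + 1] [true]).dropWhile (fun y => !y) <+: V s p γ₁ γ₂ α (p ^ (k + 1)) := by
    rw [hu, hVeq]
    exact ⟨_, rfl⟩
  have hklt : k < (V s p γ₁ γ₂ α (p ^ (k + 1))).length :=
    lt_of_lt_of_le hk hpre.length_le
  have := hpre.getElem hk
  simp only [List.get_eq_getElem]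
  rw [this]
  have := getV s p γ₁ γ₂ α (p ^ (k + 1)) k hklt
  simp only [List.get_eq_getElem] at this
  rw [this]

end St8

/-- for `w = ω(h)`, `A_w(∑ d_{m+j} p^{m+j}) = α_{d_m} s^m + (γ₁+γ₂)(1+s+⋯+s^{m-1})`
whenever `m ≥ 1`, the digits `d_{m+j}` lie in `{0,…,p-1}` and `d_m ≠ 0`. -/
theorem stmt8 (s : ℕ) (hs : 1 ≤ s) (p : ℕ) (hp : 2 ≤ p) (γ₁ γ₂ : ℕ) (α : ℕ → ℕ)
    (h : Bool → Word)
    (ha : h false = rep s)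
    (hb : h true = rep γ₁ ++ blockWord p α ++ rep γ₂)
    (w : ℕ → Bool) (hw : IsOmega h w)
    (m k : ℕ) (hm : 1 ≤ m) (d : ℕ → ℕ)
    (hd : ∀ j, j ≤ k → d (m + j) < p) (hd0 : d m ≠ 0) :
    Aw w (∑ j ∈ Finset.range (k + 1), d (m + j) * p ^ (m + j)) =
      α (d m) * s ^ m + (γ₁ + γ₂) * ∑ j ∈ Finset.range m, s ^ j := by
  have hwW : w = St8.Wd s p γ₁ γ₂ α := St8.w_eq_Wd s p γ₁ γ₂ α h hp ha hb w hw
  subst hwW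
  have hdm : d m < p := by simpa using hd 0 (Nat.zero_le k)
  set t := ∑ j ∈ Finset.range (k + 1), d (m + j) * p ^ j with ht
  set N := ∑ j ∈ Finset.range (k + 1), d (m + j) * p ^ (m + j) with hN
  have hNt : N = p ^ m * t := by
    rw [hN, ht, Finset.mul_sum]
    apply Finset.sum_congr rfl
    intro j _
    rw [pow_add]
    ring
  have htp : t % p = d m := by
    rw [ht, Finset.sum_range_succ']
    have e : ∑ j ∈ Finset.range k, d (m + (j + 1)) * p ^ (j + 1)
        = p * ∑ j ∈ Finset.range k, d (m + (j + 1)) * p ^ j := by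
      rw [Finset.mul_sum]
      apply Finset.sum_congr rfl
      intro x _
      rw [pow_succ]
      ring
    rw [e]
    simp only [pow_zero, mul_one, Nat.add_zero]
    rw [Nat.mul_add_mod, Nat.mod_eq_of_lt hdm]
  have ht0 : t % p ≠ 0 := by rw [htp]; exact hd0
  have ht1 : 1 ≤ t := Nat.pos_of_ne_zero (fun hz => ht0 (by rw [hz]; simp))
  have hN1 : 1 ≤ N := by
    rw [hNt]
    exact Nat.mul_pos (Nat.pow_pos (by omega)) ht1
  have hAN : St8.A s p γ₁ γ₂ α N
      = α (d m) * s ^ m + (γ₁ + γ₂) * ∑ j ∈ Finset.range m, s ^ j := by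
    rw [hNt, St8.A_pow_mul s p γ₁ γ₂ α hp m ht0, htp]
  have hB : St8.B s p γ₁ γ₂ α N
      = St8.B s p γ₁ γ₂ α (N - 1) + St8.A s p γ₁ γ₂ α N + 1 := by
    conv_lhs => rw [show N = (N - 1) + 1 by omega]
    rw [show St8.B s p γ₁ γ₂ α (N - 1 + 1)
        = St8.B s p γ₁ γ₂ α (N - 1) + St8.A s p γ₁ γ₂ α (N - 1 + 1) + 1 from rfl,
      show N - 1 + 1 = N by omega]
  show Nat.nth (fun n => St8.Wd s p γ₁ γ₂ α n = true) N
      - Nat.nth (fun n => St8.Wd s p γ₁ γ₂ α n = true) (N - 1) - 1 = _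
  rw [St8.nth_B, St8.nth_B]
  omega
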